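/- Let R_N and S_M be closed subspaces of a Hilbert space H with μ(R_N, S_M) := 1/inf{‖P_{S_M} r‖ : r ∈ R_N, ‖r‖=1} < ∞, and let G(f) be the generalized sampling reconstruction of f (the unique g ∈ R_N with ⟨P_{S_M} g, r⟩ = ⟨P_{S_M} f, r⟩ for all r ∈ R_N). Then ‖G(f)‖ ≤ μ(R_N, S_M) ‖f‖ for all f ∈ H. -/

import Mathlib

open MeasureTheory
open scoped RealInnerProductSpace

theorem generalized_sampling_norm_bound (H : Type*) [NormedAddCommGroup H]
    [InnerProductSpace ℝ H] [CompleteSpace H]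
    (RN SM : Submodule ℝ H) [Submodule.HasOrthogonalProjection RN] [Submodule.HasOrthogonalProjection SM]
    (c : ℝ)
    (hc : c = sInf {y : ℝ | ∃ r ∈ RN, ‖r‖ = 1 ∧ y = ‖(Submodule.orthogonalProjectionOnto SM r : H)‖})
    (hcpos : 0 < c) (f G : H) (hG : G ∈ RN)
    (hcons : ∀ r ∈ RN, ⟪(Submodule.orthogonalProjectionOnto SM G : H), r⟫ = ⟪(Submodule.orthogonalProjectionOnto SM f : H), r⟫) :
    ‖G‖ ≤ (1 / c) * ‖f‖ := by
  by_cases hG0 : G = 0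
  · simp [hG0]
    positivity
  have hGn : (0:ℝ) < ‖G‖ := norm_pos_iff.mpr hG0
  set P := fun x : H => (Submodule.orthogonalProjectionOnto SM x : H) with hP
  -- c * ‖G‖ ≤ ‖P G‖
  have hr : (‖G‖⁻¹ • G) ∈ RN := RN.smul_mem _ hG
  have hrn : ‖‖G‖⁻¹ • G‖ = 1 := by
    rw [norm_smul, norm_inv, norm_norm, inv_mul_cancel₀ hGn.ne']
  have hmem : ‖P (‖G‖⁻¹ • G)‖ ∈
      {y : ℝ | ∃ r ∈ RN, ‖r‖ = 1 ∧ y = ‖(Submodule.orthogonalProjectionOnto SM r : H)‖} :=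
    ⟨‖G‖⁻¹ • G, hr, hrn, rfl⟩
  have hbdd : BddBelow {y : ℝ | ∃ r ∈ RN, ‖r‖ = 1 ∧ y = ‖(Submodule.orthogonalProjectionOnto SM r : H)‖} :=
    ⟨0, fun y hy => by obtain ⟨r, _, _, rfl⟩ := hy; positivity⟩
  have h1 : c ≤ ‖P (‖G‖⁻¹ • G)‖ := hc ▸ csInf_le hbdd hmem
  have hsm : ‖P (‖G‖⁻¹ • G)‖ = ‖G‖⁻¹ * ‖P G‖ := by
    simp [hP, _root_.map_smul, norm_smul, abs_of_nonneg (inv_nonneg.mpr hGn.le)]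
  have h2 : c * ‖G‖ ≤ ‖P G‖ := by
    rw [hsm] at h1
    calc c * ‖G‖ ≤ (‖G‖⁻¹ * ‖P G‖) * ‖G‖ := by nlinarith
    _ = ‖P G‖ := by field_simp
  -- ‖P G‖² = ⟪P G, G⟫
  have horth : G - P G ∈ SMᗮ := Submodule.sub_starProjection_mem_orthogonal (K := SM) G
  have h3 : ⟪P G, G⟫ = ‖P G‖ ^ 2 := by
    have := horth (P G) (Submodule.orthogonalProjectionOnto SM G).2
    have h4 : ⟪P G, G - P G⟫ = 0 := this
    rw [inner_sub_right] at h4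
    rw [← real_inner_self_eq_norm_sq]
    linarith
  have h5 : ⟪P G, G⟫ = ⟪f, P G⟫ := by
    rw [hcons G hG]
    exact Submodule.inner_starProjection_left_eq_right (K := SM) f G
  have h6 : ⟪f, P G⟫ ≤ ‖f‖ * ‖P G‖ := real_inner_le_norm f (P G)
  have h7 : ‖P G‖ ≤ ‖f‖ := by nlinarith [norm_nonneg (P G), norm_nonneg f, h2]
  rw [div_mul_eq_mul_div, le_div_iff₀ hcpos, one_mul, mul_comm]
  linarith
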